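/- If γ ⊂ E is a contour, then the dual edge set γ* = {e* : e ∈ γ} is a circuit (a closed self-avoiding path) in the dual lattice L²*. -/

import Mathlib

open MeasureTheory Filter

/-- An edge of the square lattice `ℤ × ℤ`, encoded by its lower-left endpoint `base`
together with its direction: a horizontal edge joins `base` to `base + (1,0)`,
a vertical edge joins `base` to `base + (0,1)`. This encodes exactly the set
`𝔼` of nearest-neighbour edges of `ℤ²`. -/
structure LatticeEdge where
  base : ℤ × ℤ
  horiz : Bool
deriving DecidableEq

namespace LatticeEdge

/-- First endpoint of an edge. -/
def fst (e : LatticeEdge) : ℤ × ℤ := e.base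

/-- Second endpoint of an edge. -/
def snd (e : LatticeEdge) : ℤ × ℤ :=
  if e.horiz then (e.base.1 + 1, e.base.2) else (e.base.1, e.base.2 + 1)

/-- The two endpoints of an edge, as an unordered pair. -/
def ends (e : LatticeEdge) : Sym2 (ℤ × ℤ) := s(e.fst, e.snd)

end LatticeEdge

/-- The graph on `ℤ²` whose edges are the lattice edges belonging to `S`. -/
def graphOf (S : Set LatticeEdge) : SimpleGraph (ℤ × ℤ) where
  Adj u v := u ≠ v ∧ ∃ e ∈ S, e.ends = s(u, v)
  symm := by
    constructor
    intro u v h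
    obtain ⟨hne, e, he, hs⟩ := h
    exact ⟨hne.symm, e, he, hs.trans (Sym2.eq_swap)⟩
  loopless := by
    constructor
    intro u h
    exact h.1 rfl

/-- The graph `(ℤ², 𝔼 ∖ γ)` obtained by deleting the edges of `γ`. -/
def complGraph (γ : Finset LatticeEdge) : SimpleGraph (ℤ × ℤ) :=
  graphOf {e | e ∉ γ}

/-- A finite set `γ` of lattice edges is a *contour* if the graph `(ℤ², 𝔼 ∖ γ)` has
exactly one finite connected component, and `γ` is minimal with this property:
for every `e ∈ γ`, the graph `(ℤ², 𝔼 ∖ (γ ∖ {e}))` has no finite connected component. -/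
def IsContour (γ : Finset LatticeEdge) : Prop :=
  (∃! C : (complGraph γ).ConnectedComponent, C.supp.Finite) ∧
  ∀ e ∈ γ, ∀ C : (graphOf {f | f ∉ γ ∨ f = e}).ConnectedComponent, ¬ C.supp.Finite

/-- A contour `γ` *surrounds* a set `X ⊆ ℤ²` of vertices if `X` is contained in the
vertex set `I_γ` of the (unique) finite connected component of `(ℤ², 𝔼 ∖ γ)`. -/
def Surrounds (γ : Finset LatticeEdge) (X : Set (ℤ × ℤ)) : Prop :=
  IsContour γ ∧ ∃ C : (complGraph γ).ConnectedComponent, C.supp.Finite ∧ X ⊆ C.supp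

/-- `Γ^n_X` : the set of contours of cardinality `n` surrounding `X`. -/
def GammaN (X : Set (ℤ × ℤ)) (n : ℕ) : Set (Finset LatticeEdge) :=
  {γ | Surrounds γ X ∧ γ.card = n}

/-- `‖x‖ = 2(x₁ + x₂ + 2)`, the cardinality of a minimal contour surrounding `{0, x}`. -/
def normC (x : ℤ × ℤ) : ℕ := (2 * (x.1 + x.2 + 2)).toNat

/-- `β_x` : the number of minimal contours surrounding `{0, x}`. -/
noncomputable def betaX (x : ℤ × ℤ) : ℕ := Nat.card ↥(GammaN {0, x} (normC x))

/-- Number of horizontal edges of `γ`, i.e. `|γ ∩ 𝔼ʰ|`. -/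
def hCount (γ : Finset LatticeEdge) : ℕ := (γ.filter fun e => e.horiz = true).card

/-- Number of vertical edges of `γ`, i.e. `|γ ∩ 𝔼ᵛ|`. -/
def vCount (γ : Finset LatticeEdge) : ℕ := (γ.filter fun e => e.horiz = false).card

/-- The dual edge `e*` of a lattice edge `e`.  We identify the dual lattice
`ℤ² + (1/2, 1/2)` with `ℤ²` via `(a,b) ↦ (a + 1/2, b + 1/2)`; under this
identification the dual edge crossing the horizontal edge `(a,b)–(a+1,b)` joins
`(a, b-1)` to `(a, b)` (a vertical dual edge), and the dual edge crossing the
vertical edge `(a,b)–(a,b+1)` joins `(a-1, b)` to `(a, b)` (a horizontal dual edge). -/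
def dualEdge (e : LatticeEdge) : LatticeEdge :=
  if e.horiz then ⟨(e.base.1, e.base.2 - 1), false⟩ else ⟨(e.base.1 - 1, e.base.2), true⟩

/-- A finite set `S` of (dual) lattice edges is a *circuit* if it is the edge set of a
closed self-avoiding path: there are `n ≥ 3` distinct vertices `c 0, …, c (n-1)`,
cyclically consecutive ones being joined by an edge of `S`, and every edge of `S` arising
this way. -/
def IsCircuit (S : Finset LatticeEdge) : Prop :=
  ∃ n : ℕ, 3 ≤ n ∧ ∃ c : ZMod n → ℤ × ℤ, Function.Injective c ∧
    (∀ i : ZMod n, ∃ e ∈ S, e.ends = s(c i, c (i + 1))) ∧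
    (∀ e ∈ S, ∃ i : ZMod n, e.ends = s(c i, c (i + 1)))

/-- The dual edge `e_k*` joining `(k - 1/2, -1/2)` to `(k - 1/2, 1/2)`; in our
identification of the dual lattice with `ℤ²` this is the vertical dual edge with base
`(k-1, -1)`, i.e. the dual of the horizontal edge `(k-1, 0)–(k, 0)`. -/
def ekStar (k : ℤ) : LatticeEdge := ⟨(k - 1, -1), false⟩

/-- The probability that the edge `e` is open: `p_h` for horizontal edges and `p_v`
for vertical ones. -/
noncomputable def edgeProb (ph pv : ℝ) (e : LatticeEdge) : ℝ := if e.horiz then ph else pv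

/-- `P` is the Bernoulli product measure `P_{(p_h, p_v)}` on configurations
`ω ∈ {0,1}^𝔼` (encoded as `LatticeEdge → Bool`, `true` = open): it is a probability
measure and, for every finite set of edges, the states of those edges are independent
Bernoulli variables with the correct parameters.  These cylinder probabilities
characterize the product measure uniquely. -/
def IsBernoulliProduct (ph pv : ℝ) (P : Measure (LatticeEdge → Bool)) : Prop :=
  IsProbabilityMeasure P ∧
    ∀ (F : Finset LatticeEdge) (σ : LatticeEdge → Bool),
      P {ω | ∀ e ∈ F, ω e = σ e} =
        ∏ e ∈ F, ENNReal.ofReal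
          (if σ e then edgeProb ph pv e else 1 - edgeProb ph pv e)

/-- The graph of open edges of the configuration `ω`. -/
def openGraph (ω : LatticeEdge → Bool) : SimpleGraph (ℤ × ℤ) :=
  graphOf {e | ω e = true}

/-- `x` and `y` belong to the same finite open cluster of the configuration `ω`. -/
def SameFiniteCluster (ω : LatticeEdge → Bool) (x y : ℤ × ℤ) : Prop :=
  ∃ C : (openGraph ω).ConnectedComponent, x ∈ C.supp ∧ y ∈ C.supp ∧ C.supp.Finite

/-- The truncated (finite) connectivity `τ^f_p(x,y)`: the probability that `x` and `y`
belong to the same finite open cluster. -/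
noncomputable def tauF (P : Measure (LatticeEdge → Bool)) (x y : ℤ × ℤ) : ℝ :=
  (P {ω | SameFiniteCluster ω x y}).toReal

/-- The box `V_N = ([-N,N] × [-N,N]) ∩ ℤ²`. -/
def VN (N : ℕ) : Set (ℤ × ℤ) := {v | |v.1| ≤ (N : ℤ) ∧ |v.2| ≤ (N : ℤ)}

/-- The interior vertex boundary `∂_v^int V_N = {x ∈ V_N : d(x, ℤ² ∖ V_N) = 1}`. -/
def intBdry (N : ℕ) : Set (ℤ × ℤ) :=
  {v | (|v.1| ≤ (N : ℤ) ∧ |v.2| ≤ (N : ℤ)) ∧ (|v.1| = (N : ℤ) ∨ |v.2| = (N : ℤ))}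

/-- `e ∈ E_N`: both endpoints of `e` lie in `V_N`. -/
def edgeInBox (N : ℕ) (e : LatticeEdge) : Prop := e.fst ∈ VN N ∧ e.snd ∈ VN N

/-- The graph on `(V_N, open edges of E_N)` (vertices outside `V_N` are isolated). -/
def openGraphN (N : ℕ) (ω : LatticeEdge → Bool) : SimpleGraph (ℤ × ℤ) :=
  graphOf {e | edgeInBox N e ∧ ω e = true}

/-- The finite-volume event defining `τ^{f,N}_p(x,y)`: there is an open cluster `A` of
`(V_N, open edges of E_N)` with `{x,y} ⊆ V_A` and `V_A ∩ ∂_v^int V_N = ∅`. -/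
def FiniteVolEvent (N : ℕ) (x y : ℤ × ℤ) (ω : LatticeEdge → Bool) : Prop :=
  ∃ C : (openGraphN N ω).ConnectedComponent,
    x ∈ C.supp ∧ y ∈ C.supp ∧ C.supp ∩ intBdry N = ∅

/-- The finite-volume finite connectivity `τ^{f,N}_p(x,y)`. -/
noncomputable def tauFN (P : Measure (LatticeEdge → Bool)) (N : ℕ) (x y : ℤ × ℤ) : ℝ :=
  (P {ω | FiniteVolEvent N x y ω}).toReal

/-- `λ = (1-p)/p`. -/
noncomputable def lam (p : ℝ) : ℝ := (1 - p) / p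

/-- The threshold `η̃(p_h, x₁, x₂)` from the paper. -/
noncomputable def etaTilde (ph : ℝ) (x1 x2 : ℤ) : ℝ :=
  ((betaX (x1, x2) : ℝ) * ph ^ (4 * (x1 + x2 + 2)) /
      ((4 ^ 3 * lam ph) ^ (x1 + x2 + 3) / (1 - 4 ^ 3 * lam ph) +
        (betaX (x1, x2) : ℝ) * (1 + 12 * lam ph) ^ (2 * (x1 + x2 + 2)))) ^
    (1 / (2 * ((x2 : ℝ) - (x1 : ℝ))))

namespace CircuitAux
open LatticeEdge

/-- horizontal edge -/
def hE (x y : ℤ) : LatticeEdge := ⟨(x, y), true⟩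
/-- vertical edge -/
def vE (x y : ℤ) : LatticeEdge := ⟨(x, y), false⟩

lemma snd_sum (e : LatticeEdge) : e.snd.1 + e.snd.2 = e.fst.1 + e.fst.2 + 1 := by
  unfold LatticeEdge.snd LatticeEdge.fst
  cases e.horiz <;> simp <;> ring

lemma fst_ne_snd (e : LatticeEdge) : e.fst ≠ e.snd := by
  intro h
  have := snd_sum e
  rw [← h] at this
  omega

lemma eq_of_ends_eq {e f : LatticeEdge} (h : e.ends = f.ends) : e = f := by
  unfold LatticeEdge.ends at h
  rw [Sym2.eq_iff] at h
  rcases h with ⟨h1, h2⟩ | ⟨h1, h2⟩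
  · -- fst = fst, snd = snd
    have hb : e.base = f.base := h1
    cases e with
    | mk be he =>
      cases f with
      | mk bf hf =>
        simp only at hb
        subst hb
        unfold LatticeEdge.snd at h2
        cases he <;> cases hf <;> simp_all
  · -- e.fst = f.snd, e.snd = f.fst : impossible
    have s1 := snd_sum e
    have s2 := snd_sum f
    have t1 : e.fst.1 + e.fst.2 = f.snd.1 + f.snd.2 := by rw [h1]
    have t2 : e.snd.1 + e.snd.2 = f.fst.1 + f.fst.2 := by rw [h2]
    omega

lemma mem_ends_iff {w : ℤ × ℤ} {e : LatticeEdge} : w ∈ e.ends ↔ w = e.fst ∨ w = e.snd := by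
  unfold LatticeEdge.ends; exact Sym2.mem_iff

lemma hE_fst (x y : ℤ) : (hE x y).fst = (x, y) := rfl
lemma hE_snd (x y : ℤ) : (hE x y).snd = (x + 1, y) := rfl
lemma vE_fst (x y : ℤ) : (vE x y).fst = (x, y) := rfl
lemma vE_snd (x y : ℤ) : (vE x y).snd = (x, y + 1) := rfl




section Graphs
open LatticeEdge

lemma graphOf_adj_of_mem {S : Set LatticeEdge} {e : LatticeEdge} (he : e ∈ S) :
    (graphOf S).Adj e.fst e.snd := ⟨fst_ne_snd e, e, he, rfl⟩

lemma supp_closed {V : Type*} {G : SimpleGraph V} (C : G.ConnectedComponent)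
    {u v : V} (hu : u ∈ C.supp) (h : G.Adj u v) : v ∈ C.supp := by
  rw [SimpleGraph.ConnectedComponent.mem_supp_iff] at hu ⊢
  rw [← hu]
  exact SimpleGraph.ConnectedComponent.sound h.symm.reachable

lemma supp_subset_of_closed {V : Type*} {G : SimpleGraph V} {P : Set V}
    (hP : ∀ ⦃u v : V⦄, u ∈ P → G.Adj u v → v ∈ P) {v₀ : V} (h0 : v₀ ∈ P) :
    (G.connectedComponentMk v₀).supp ⊆ P := by
  have key : ∀ (a b : V) (_ : G.Walk a b), a ∈ P → b ∈ P := by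
    intro a b w
    induction w with
    | nil => exact id
    | cons h p ih => intro ha; exact ih (hP ha h)
  intro u hu
  rw [SimpleGraph.ConnectedComponent.mem_supp_iff] at hu
  have : G.Reachable v₀ u := (SimpleGraph.ConnectedComponent.exact hu).symm
  obtain ⟨w⟩ := this
  exact key _ _ w h0

end Graphs

section Contour

variable {γ : Finset LatticeEdge}

open LatticeEdge

/-- the modified graph in the minimality condition -/
def mGraph (γ : Finset LatticeEdge) (e : LatticeEdge) : SimpleGraph (ℤ × ℤ) :=
  graphOf {f | f ∉ γ ∨ f = e}

/-- Core structure: if `γ` is a contour with finite component `C₀`, then `γ` is exactly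
the edge boundary of `I = C₀.supp`. -/
lemma contour_boundary (h : IsContour γ) (C₀ : (complGraph γ).ConnectedComponent)
    (hfin : C₀.supp.Finite) :
    ∀ e : LatticeEdge, e ∈ γ ↔ ¬((e.fst ∈ C₀.supp) ↔ (e.snd ∈ C₀.supp)) := by
  intro e
  constructor
  · intro he hiff
    -- minimality: the graph with e restored has no finite component
    have hmin := h.2 e he
    -- I is closed under adjacency in the modified graph
    have hclosed : ∀ ⦃u v : ℤ × ℤ⦄, u ∈ C₀.supp → (mGraph γ e).Adj u v → v ∈ C₀.supp := by
      intro u v hu ⟨hne, f, hf, hends⟩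
      rcases hf with hf | rfl
      · exact supp_closed C₀ hu ⟨hne, f, hf, hends⟩
      · -- f = e ; u, v are the two ends of e
        unfold LatticeEdge.ends at hends
        rw [Sym2.eq_iff] at hends
        rcases hends with ⟨h1, h2⟩ | ⟨h1, h2⟩
        · rw [← h1] at hu; rw [← h2]; exact hiff.mp hu
        · rw [← h2] at hu; rw [← h1]; exact hiff.mpr hu
    -- C₀.supp is nonempty
    obtain ⟨v₀, hv₀⟩ : C₀.supp.Nonempty := C₀.exists_rep.imp (fun v hv => by
      exact hv)
    have hsub := supp_subset_of_closed hclosed hv₀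
    exact hmin ((mGraph γ e).connectedComponentMk v₀) (hfin.subset hsub)
  · intro hne
    by_contra he
    have hadj : (complGraph γ).Adj e.fst e.snd := graphOf_adj_of_mem he
    exact hne ⟨fun h1 => supp_closed C₀ h1 hadj, fun h2 => supp_closed C₀ h2 hadj.symm⟩

/-- a contour is nonempty -/
lemma contour_nonempty (h : IsContour γ) (C₀ : (complGraph γ).ConnectedComponent)
    (hfin : C₀.supp.Finite) : γ.Nonempty := by
  obtain ⟨v₀, hv₀⟩ : C₀.supp.Nonempty := C₀.exists_rep.imp (fun v hv => by
    exact hv)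
  -- take an element of I with maximal first coordinate
  obtain ⟨w, hwI, hwmax⟩ := Set.Finite.exists_maximalFor Prod.fst C₀.supp hfin ⟨v₀, hv₀⟩
  refine ⟨hE w.1 w.2, ?_⟩
  rw [contour_boundary h C₀ hfin]
  intro hiff
  have hw : (w.1, w.2) ∈ C₀.supp := by simpa using hwI
  have h2 : (w.1 + 1, w.2) ∈ C₀.supp := hiff.mp hw
  have := hwmax h2 (by simp)
  simp at this

end Contour


section Parity
open LatticeEdge

/-- indicator of membership, in `ZMod 2` -/
def ind (D : Finset LatticeEdge) (e : LatticeEdge) : ZMod 2 := if e ∈ D then 1 else 0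

/-- face count mod 2 at the face with lower-left corner `(a,b)` -/
def fc (D : Finset LatticeEdge) (a b : ℤ) : ZMod 2 :=
  ind D (hE a b) + ind D (hE a (b + 1)) + ind D (vE a b) + ind D (vE (a + 1) b)

/-- parity of the number of horizontal edges of `D` in row `y` to the right of `x` -/
def chi (D : Finset LatticeEdge) (x y : ℤ) : ZMod 2 :=
  ∑ f ∈ D, if f.horiz = true ∧ f.base.2 = y ∧ x ≤ f.base.1 then 1 else 0

lemma ind_eq_sum (D : Finset LatticeEdge) (e : LatticeEdge) :
    ind D e = ∑ f ∈ D, if f = e then 1 else 0 := by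
  rw [Finset.sum_ite_eq' D e (fun _ => (1 : ZMod 2))]; rfl

lemma chiA (D : Finset LatticeEdge) (x y : ℤ) :
    chi D x y = chi D (x + 1) y + ind D (hE x y) := by
  rw [chi, chi, ind_eq_sum, ← Finset.sum_add_distrib]
  apply Finset.sum_congr rfl
  intro f _
  rcases f with ⟨⟨b1, b2⟩, hz⟩
  cases hz
  · simp [hE]
  · by_cases hb2 : b2 = y
    · subst hb2
      by_cases hb1 : b1 = x
      · subst hb1; simp [hE]
      · have : ((x ≤ b1) ↔ (x + 1 ≤ b1)) := by omega
        simp [hE, hb1]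
        split_ifs with h1 h2 h2 <;> simp_all <;> omega
    · simp [hE, hb2]

private lemma z2step (a b c d e f : ZMod 2) (h1 : a + b = f) (h2 : c + d + e + f = 0) :
    (a + c) + (b + d) = e := by revert a b c d e f; decide

private lemma z2eq (a b : ZMod 2) (h : a + b = 0) : a = b := by revert a b; decide

/-- bound on coordinates of edges of `D` -/
def bnd (D : Finset LatticeEdge) : ℕ := D.sup (fun f => f.base.1.natAbs ⊔ f.base.2.natAbs)

lemma bnd_spec {D : Finset LatticeEdge} {f : LatticeEdge} (hf : f ∈ D) :
    f.base.1.natAbs ≤ bnd D ∧ f.base.2.natAbs ≤ bnd D := by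
  have h := Finset.le_sup (f := fun g : LatticeEdge => g.base.1.natAbs ⊔ g.base.2.natAbs) hf
  exact ⟨le_trans (le_max_left _ _) h, le_trans (le_max_right _ _) h⟩

lemma chi_right (D : Finset LatticeEdge) {x : ℤ} (y : ℤ) (hx : (bnd D : ℤ) < x) :
    chi D x y = 0 := by
  rw [chi]
  apply Finset.sum_eq_zero
  intro f hf
  have := (bnd_spec hf).1
  rw [if_neg]
  rintro ⟨-, -, h3⟩
  omega

lemma chi_row (D : Finset LatticeEdge) (x : ℤ) {y : ℤ} (hy : bnd D < y.natAbs) :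
    chi D x y = 0 := by
  rw [chi]
  apply Finset.sum_eq_zero
  intro f hf
  have := (bnd_spec hf).2
  rw [if_neg]
  rintro ⟨-, h2, -⟩
  omega

lemma ind_zero_of_base {D : Finset LatticeEdge} {e : LatticeEdge}
    (h : bnd D < e.base.1.natAbs ∨ bnd D < e.base.2.natAbs) : ind D e = 0 := by
  rw [ind, if_neg]
  intro he
  have := bnd_spec he
  rcases h with h | h <;> omega

lemma chiB {D : Finset LatticeEdge} (hev : ∀ a b, fc D a b = 0) (x y : ℤ) :
    chi D x y + chi D x (y + 1) = ind D (vE x y) := by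
  set B : ℕ := bnd D with hB
  -- step lemma
  have step : ∀ x : ℤ, (chi D (x+1) y + chi D (x+1) (y+1) = ind D (vE (x+1) y)) →
      (chi D x y + chi D x (y+1) = ind D (vE x y)) := by
    intro x ih
    rw [chiA D x y, chiA D x (y+1)]
    have h4 := hev x y
    rw [fc] at h4
    exact z2step _ _ _ _ _ _ ih h4
  have base : ∀ x : ℤ, (B : ℤ) < x → chi D x y + chi D x (y+1) = ind D (vE x y) := by
    intro x hx
    rw [chi_right D y hx, chi_right D (y+1) hx, ind_zero_of_base (Or.inl (by simp only [vE]; omega))]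
    simp
  have claim : ∀ n : ℕ, chi D ((B:ℤ) + 1 - n) y + chi D ((B:ℤ)+1-n) (y+1) = ind D (vE ((B:ℤ)+1-n) y) := by
    intro n
    induction n with
    | zero => exact base _ (by omega)
    | succ m ih =>
        have := step ((B:ℤ) + 1 - (m+1)) (by rw [show (B:ℤ)+1-(m+1)+1 = (B:ℤ)+1-m by push_cast; ring]; exact ih)
        exact this
  by_cases hx : (B:ℤ) < x
  · exact base x hx
  · have := claim ((B + 1 : ℤ) - x).toNat
    rw [show (B:ℤ)+1-((B+1:ℤ)-x).toNat = x by omega] at this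
    exact this

lemma chi_left {D : Finset LatticeEdge} (hev : ∀ a b, fc D a b = 0) {x : ℤ} (y : ℤ)
    (hx : x < -(bnd D : ℤ)) : chi D x y = 0 := by
  set B : ℕ := bnd D with hB
  have hconst : ∀ y : ℤ, chi D x y = chi D x (y + 1) := by
    intro y
    apply z2eq
    rw [chiB hev x y, ind_zero_of_base (Or.inl (by simp only [vE]; omega))]
  have up : ∀ n : ℕ, chi D x y = chi D x (y + n) := by
    intro n
    induction n with
    | zero => simp
    | succ m ih =>
        rw [ih, show (y + (m + 1 : ℕ) : ℤ) = (y + m) + 1 by push_cast; ring]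
        exact hconst (y + m)
  by_cases hy : B < y.natAbs
  · exact chi_row D x hy
  · have := up ((B : ℤ) + 1 - y).toNat
    rw [this]
    apply chi_row
    omega

end Parity


section MinimalEven
open LatticeEdge

private lemma z2ne (a b : ZMod 2) : a = b ↔ ((a = 1) ↔ (b = 1)) := by revert a b; decide
private lemma z2add (a b : ZMod 2) : a + b = 0 ↔ a = b := by revert a b; decide
private lemma z2addone (a b : ZMod 2) : a + b = 1 ↔ a ≠ b := by revert a b; decide
private lemma z2one (a b : ZMod 2) (h : a ≠ b) : a = 1 ∨ b = 1 := by revert a b; decide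
private lemma z2rearr (a b c : ZMod 2) (h : a = b + c) : a + b = c := by revert a b c; decide

/-- `chi` at the two ends of an edge differs by the indicator of the edge. -/
lemma chi_step {D : Finset LatticeEdge} (hev : ∀ a b, fc D a b = 0) (e : LatticeEdge) :
    chi D e.fst.1 e.fst.2 + chi D e.snd.1 e.snd.2 = ind D e := by
  rcases e with ⟨⟨x, y⟩, hz⟩
  cases hz
  · exact chiB hev x y
  · exact z2rearr _ _ _ (chiA D x y)

lemma chi_boundary {D : Finset LatticeEdge} (hev : ∀ a b, fc D a b = 0) (e : LatticeEdge) :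
    e ∈ D ↔ chi D e.fst.1 e.fst.2 ≠ chi D e.snd.1 e.snd.2 := by
  have h := chi_step hev e
  rw [ind] at h
  by_cases he : e ∈ D
  · rw [if_pos he] at h
    exact ⟨fun _ => (z2addone _ _).mp h, fun _ => he⟩
  · rw [if_neg he] at h
    simp only [he, false_iff, not_not]
    exact (z2add _ _).mp h

/-- The set where `chi = 1` is finite. -/
lemma chiOne_finite {D : Finset LatticeEdge} (hev : ∀ a b, fc D a b = 0) :
    {v : ℤ × ℤ | chi D v.1 v.2 = 1}.Finite := by
  apply Set.Finite.subset (Set.finite_Icc (-(bnd D : ℤ) - 1, -(bnd D : ℤ) - 1) ((bnd D : ℤ) + 1, (bnd D : ℤ) + 1))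
  rintro ⟨x, y⟩ hv
  simp only [Set.mem_setOf_eq] at hv
  have h1 : ¬ (bnd D : ℤ) < x := fun hc => by rw [chi_right D y hc] at hv; exact one_ne_zero hv.symm
  have h2 : ¬ x < -(bnd D : ℤ) := fun hc => by rw [chi_left hev y hc] at hv; exact one_ne_zero hv.symm
  have h3 : ¬ bnd D < y.natAbs := fun hc => by rw [chi_row D x hc] at hv; exact one_ne_zero hv.symm
  simp only [Set.mem_Icc, Prod.le_def]
  omega

/-- Key rigidity lemma: a nonempty subset of the contour whose face counts are all even
must be the whole contour. -/
lemma even_subset_eq {γ : Finset LatticeEdge} (h : IsContour γ)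
    {D : Finset LatticeEdge} (hD : D ⊆ γ) (hne : D.Nonempty)
    (hev : ∀ a b, fc D a b = 0) : D = γ := by
  by_contra hDγ
  obtain ⟨e0, he0γ, he0D⟩ : ∃ e0 ∈ γ, e0 ∉ D := by
    by_contra hc
    push_neg at hc
    exact hDγ (Finset.Subset.antisymm hD hc)
  set J : Set (ℤ × ℤ) := {v : ℤ × ℤ | chi D v.1 v.2 = 1} with hJ
  -- J is nonempty
  obtain ⟨e1, he1⟩ := hne
  have hne1 : chi D e1.fst.1 e1.fst.2 ≠ chi D e1.snd.1 e1.snd.2 := (chi_boundary hev e1).mp he1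
  have hJne : ∃ v₁, v₁ ∈ J := by
    rcases z2one _ _ hne1 with h1 | h1
    · exact ⟨e1.fst, h1⟩
    · exact ⟨e1.snd, h1⟩
  obtain ⟨v₁, hv₁⟩ := hJne
  -- J is closed under adjacency in the modified graph
  have hclosed : ∀ ⦃u v : ℤ × ℤ⦄, u ∈ J → (mGraph γ e0).Adj u v → v ∈ J := by
    rintro u v hu ⟨hne', f, hf, hends⟩
    have hfD : f ∉ D := by
      rcases hf with hf | rfl
      · exact fun hc => hf (hD hc)
      · exact he0D
    have heq : chi D f.fst.1 f.fst.2 = chi D f.snd.1 f.snd.2 := by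
      by_contra hc
      exact hfD ((chi_boundary hev f).mpr hc)
    unfold LatticeEdge.ends at hends
    rw [Sym2.eq_iff] at hends
    simp only [hJ, Set.mem_setOf_eq] at hu ⊢
    rcases hends with ⟨h1, h2⟩ | ⟨h1, h2⟩
    · rw [← h2, ← heq, h1]; exact hu
    · rw [← h1, heq, h2]; exact hu
  have hsub := supp_subset_of_closed hclosed hv₁
  exact h.2 e0 he0γ ((mGraph γ e0).connectedComponentMk v₁)
    ((chiOne_finite hev).subset hsub)

private lemma z2fc (p q r s : ZMod 2) : (p + q) + (r + s) + (p + r) + (q + s) = 0 := by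
  revert p q r s; decide

/-- A contour has even face counts. -/
lemma fc_contour {γ : Finset LatticeEdge} (h : IsContour γ)
    (C₀ : (complGraph γ).ConnectedComponent) (hfin : C₀.supp.Finite) :
    ∀ a b, fc γ a b = 0 := by
  classical
  intro a b
  set χI : ℤ × ℤ → ZMod 2 := fun v => if v ∈ C₀.supp then 1 else 0 with hχ
  have key : ∀ e : LatticeEdge, ind γ e = χI e.fst + χI e.snd := by
    intro e
    have hb := contour_boundary h C₀ hfin e
    rw [ind, hχ]
    by_cases h1 : e.fst ∈ C₀.supp <;> by_cases h2 : e.snd ∈ C₀.supp <;>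
      simp only [h1, h2, if_pos, if_neg, if_true, if_false] <;>
      [skip; skip; skip; skip] <;>
      first
        | (rw [if_neg (fun hc => (hb.mp hc) (by tauto))]; decide)
        | (rw [if_pos (hb.mpr (by tauto))]; decide)
  rw [fc, key, key, key, key]
  have e1 : (hE a b).fst = (a, b) := rfl
  have e2 : (hE a b).snd = (a + 1, b) := rfl
  have e3 : (hE a (b+1)).fst = (a, b + 1) := rfl
  have e4 : (hE a (b+1)).snd = (a + 1, b + 1) := rfl
  have e5 : (vE a b).fst = (a, b) := rfl
  have e6 : (vE a b).snd = (a, b + 1) := rfl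
  have e7 : (vE (a+1) b).fst = (a + 1, b) := rfl
  have e8 : (vE (a+1) b).snd = (a + 1, b + 1) := rfl
  rw [e1, e2, e3, e4, e5, e6, e7, e8]
  exact z2fc _ _ _ _

end MinimalEven


section Dual
open LatticeEdge

lemma dualEdge_injective : Function.Injective dualEdge := by
  rintro ⟨⟨x, y⟩, hz⟩ ⟨⟨x', y'⟩, hz'⟩ h
  cases hz <;> cases hz' <;> simp [dualEdge] at h ⊢ <;> omega

/-- degree (mod 2) of a vertex `w` in the edge set `T` -/
def dg (T : Finset LatticeEdge) (w : ℤ × ℤ) : ZMod 2 :=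
  ((T.filter (fun f => w ∈ f.ends)).card : ZMod 2)

lemma mem_dualEdge_ends (e : LatticeEdge) (a b : ℤ) :
    ((a, b) ∈ (dualEdge e).ends) ↔
      (e = hE a b ∨ e = hE a (b + 1) ∨ e = vE a b ∨ e = vE (a + 1) b) := by
  rcases e with ⟨⟨x, y⟩, hz⟩
  cases hz <;>
    simp [dualEdge, mem_ends_iff, LatticeEdge.fst, LatticeEdge.snd, hE, vE,
      Prod.ext_iff, LatticeEdge.mk.injEq] <;> omega

private lemma z2four (p1 p2 p3 p4 : Prop) [Decidable p1] [Decidable p2] [Decidable p3]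
    [Decidable p4] (h12 : ¬(p1 ∧ p2)) (h13 : ¬(p1 ∧ p3)) (h14 : ¬(p1 ∧ p4))
    (h23 : ¬(p2 ∧ p3)) (h24 : ¬(p2 ∧ p4)) (h34 : ¬(p3 ∧ p4)) :
    (if p1 ∨ p2 ∨ p3 ∨ p4 then (1 : ZMod 2) else 0) =
      (if p1 then (1 : ZMod 2) else 0) + (if p2 then 1 else 0) + (if p3 then 1 else 0)
        + (if p4 then 1 else 0) := by
  by_cases h1 : p1 <;> by_cases h2 : p2 <;> by_cases h3 : p3 <;> by_cases h4 : p4 <;>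
    simp_all

lemma dg_image_dual (T : Finset LatticeEdge) (a b : ℤ) :
    dg (T.image dualEdge) (a, b) = fc T a b := by
  classical
  rw [dg, Finset.card_filter, Nat.cast_sum]
  rw [Finset.sum_image (fun x _ y _ h => dualEdge_injective h)]
  have : ∀ e ∈ T, ((if (a, b) ∈ (dualEdge e).ends then 1 else 0 : ℕ) : ZMod 2) =
      (if e = hE a b then (1 : ZMod 2) else 0) + (if e = hE a (b+1) then 1 else 0)
        + (if e = vE a b then 1 else 0) + (if e = vE (a+1) b then 1 else 0) := by
    intro e _
    rw [show ∀ p : Prop, ∀ _ : Decidable p, ((if p then 1 else 0 : ℕ) : ZMod 2) = if p then 1 else 0 from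
      fun p hp => by split_ifs <;> simp]
    rw [if_congr (mem_dualEdge_ends e a b) rfl rfl]
    apply z2four <;> rintro ⟨rfl, h⟩ <;> simp [hE, vE, LatticeEdge.mk.injEq, Prod.ext_iff] at h <;> omega
  rw [Finset.sum_congr rfl this]
  rw [Finset.sum_add_distrib, Finset.sum_add_distrib, Finset.sum_add_distrib]
  rw [Finset.sum_ite_eq' T (hE a b), Finset.sum_ite_eq' T (hE a (b+1)),
    Finset.sum_ite_eq' T (vE a b), Finset.sum_ite_eq' T (vE (a+1) b)]
  rfl

/-- the two dual-side hypotheses for the cycle-extraction argument -/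
lemma dual_even {γ : Finset LatticeEdge} (h : IsContour γ)
    (C₀ : (complGraph γ).ConnectedComponent) (hfin : C₀.supp.Finite) :
    ∀ w : ℤ × ℤ, dg (γ.image dualEdge) w = 0 := by
  rintro ⟨a, b⟩
  rw [dg_image_dual]
  exact fc_contour h C₀ hfin a b

lemma dual_min {γ : Finset LatticeEdge} (h : IsContour γ) :
    ∀ T ⊆ γ.image dualEdge, T.Nonempty → (∀ w, dg T w = 0) → T = γ.image dualEdge := by
  intro T hT hTne hTev
  classical
  set T₀ : Finset LatticeEdge := γ.filter (fun e => dualEdge e ∈ T) with hT₀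
  have himg : T₀.image dualEdge = T := by
    apply Finset.Subset.antisymm
    · intro f hf
      simp only [hT₀, Finset.mem_image, Finset.mem_filter] at hf
      obtain ⟨e, ⟨-, he2⟩, rfl⟩ := hf
      exact he2
    · intro f hf
      obtain ⟨e, he, rfl⟩ := Finset.mem_image.mp (hT hf)
      exact Finset.mem_image.mpr ⟨e, Finset.mem_filter.mpr ⟨he, hf⟩, rfl⟩
  have hT₀ne : T₀.Nonempty := by
    rw [← Finset.image_nonempty (f := dualEdge)]
    rw [himg]; exact hTne
  have hev : ∀ a b, fc T₀ a b = 0 := by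
    intro a b
    rw [← dg_image_dual, himg]
    exact hTev (a, b)
  have h2 := even_subset_eq h (Finset.filter_subset _ _) hT₀ne hev
  rw [← hT₀] at h2
  rw [← himg, h2]

end Dual


section Cycle
open LatticeEdge

lemma ends_eq_iff_ne {f : LatticeEdge} {a b : ℤ × ℤ} (h : f.ends = s(a, b)) : a ≠ b := by
  unfold LatticeEdge.ends at h
  rw [Sym2.eq_iff] at h
  have := fst_ne_snd f
  rcases h with ⟨h1, h2⟩ | ⟨h1, h2⟩ <;> rw [← h1, ← h2] <;> [exact this; exact this.symm] 

lemma mem_ends_left {f : LatticeEdge} {a b : ℤ × ℤ} (h : f.ends = s(a, b)) : a ∈ f.ends := by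
  rw [h]; exact Sym2.mem_mk_left a b

lemma mem_ends_right {f : LatticeEdge} {a b : ℤ × ℤ} (h : f.ends = s(a, b)) : b ∈ f.ends := by
  rw [h]; exact Sym2.mem_mk_right a b

variable (S : Finset LatticeEdge)

/-- vertex set of `S` -/
def VS : Finset (ℤ × ℤ) := S.image LatticeEdge.fst ∪ S.image LatticeEdge.snd

lemma mem_VS_of_ends {f : LatticeEdge} {w : ℤ × ℤ} (hf : f ∈ S) (hw : w ∈ f.ends) :
    w ∈ VS S := by
  rw [mem_ends_iff] at hw
  rw [VS, Finset.mem_union]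
  rcases hw with rfl | rfl
  · exact Or.inl (Finset.mem_image_of_mem _ hf)
  · exact Or.inr (Finset.mem_image_of_mem _ hf)

/-- a self-avoiding path whose steps are edges of `S` -/
def Good (l : List (ℤ × ℤ)) : Prop :=
  2 ≤ l.length ∧ l.Nodup ∧ l.Chain' (fun u v => ∃ f ∈ S, f.ends = s(u, v))

lemma good_mem_VS {l : List (ℤ × ℤ)} (h : Good S l) : ∀ x ∈ l, x ∈ VS S := by
  intro x hx
  obtain ⟨k, hk⟩ := List.mem_iff_get.mp hx
  have hchain := List.isChain_iff_getElem.mp h.2.2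
  by_cases hlt : k.val < l.length - 1
  · obtain ⟨f, hfS, hf⟩ := hchain k.val (by omega)
    exact mem_VS_of_ends S hfS (by rw [← hk]; exact mem_ends_left hf)
  · have hk1 : k.val = l.length - 1 := by omega
    have h1 : k.val - 1 < l.length - 1 := by
      have := h.1; omega
    obtain ⟨f, hfS, hf⟩ := hchain (k.val - 1) (by omega)
    apply mem_VS_of_ends S hfS
    rw [← hk]
    have hkk : k = (⟨k.val - 1 + 1, by have := h.1; omega⟩ : Fin l.length) :=
      Fin.ext (by simp; have := h.1; omega)
    rw [hkk]
    exact mem_ends_right hf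

lemma good_length_le {l : List (ℤ × ℤ)} (h : Good S l) : l.length ≤ (VS S).card := by
  rw [← List.toFinset_card_of_nodup h.2.1]
  apply Finset.card_le_card
  intro x hx
  exact good_mem_VS S h x (List.mem_toFinset.mp hx)

/-- (2 : ZMod n) ≠ 0 for n ≥ 3 -/
lemma two_ne_zero_zmod {n : ℕ} (hn : 3 ≤ n) : (2 : ZMod n) ≠ 0 := by
  haveI : NeZero n := ⟨by omega⟩
  intro hc
  rw [show (2 : ZMod n) = ((2 : ℕ) : ZMod n) by push_cast; ring] at hc
  rw [ZMod.natCast_eq_zero_iff] at hc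
  have := Nat.le_of_dvd (by norm_num) hc
  omega

lemma one_ne_zero_zmod {n : ℕ} (hn : 3 ≤ n) : (1 : ZMod n) ≠ 0 := by
  haveI : NeZero n := ⟨by omega⟩
  intro hc
  rw [show (1 : ZMod n) = ((1 : ℕ) : ZMod n) by push_cast; ring] at hc
  rw [ZMod.natCast_eq_zero_iff] at hc
  have := Nat.le_of_dvd (by norm_num) hc
  omega

lemma self_ne_add_one_zmod {n : ℕ} (hn : 3 ≤ n) (i : ZMod n) : i ≠ i + 1 := by
  intro hc
  exact one_ne_zero_zmod hn (by linear_combination -hc)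

/-- degree of any vertex in the edge set of an injectively-indexed cycle is even -/
lemma dg_cycle {n : ℕ} (hn : 3 ≤ n) [NeZero n] (c : ZMod n → ℤ × ℤ) (hc : Function.Injective c)
    (g : ZMod n → LatticeEdge) (hg : ∀ i, (g i).ends = s(c i, c (i + 1))) (w : ℤ × ℤ) :
    dg (Finset.image g Finset.univ) w = 0 := by
  classical
  have ginj : Function.Injective g := by
    intro i i' hii
    have h : s(c i, c (i + 1)) = s(c i', c (i' + 1)) := by rw [← hg, ← hg, hii]
    rw [Sym2.eq_iff] at h
    rcases h with ⟨h1, h2⟩ | ⟨h1, h2⟩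
    · exact hc h1
    · exfalso
      have e1 : i = i' + 1 := hc h1
      have e2 : i + 1 = i' := hc h2
      exact two_ne_zero_zmod hn (by linear_combination e2 - e1)
  rw [dg, Finset.filter_image, Finset.card_image_of_injective _ ginj, Finset.card_filter,
    Nat.cast_sum]
  have key : ∀ i : ZMod n, ((if w ∈ (g i).ends then 1 else 0 : ℕ) : ZMod 2) =
      (if w = c i then (1 : ZMod 2) else 0) + (if w = c (i + 1) then 1 else 0) := by
    intro i
    have hne : c i ≠ c (i + 1) := fun hcc => self_ne_add_one_zmod hn i (hc hcc)
    have hmem : w ∈ (g i).ends ↔ (w = c i ∨ w = c (i + 1)) := by rw [hg i]; exact Sym2.mem_iff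
    rw [if_congr hmem rfl rfl]
    by_cases h1 : w = c i <;> by_cases h2 : w = c (i + 1) <;> simp_all
  rw [Finset.sum_congr rfl (fun i _ => key i), Finset.sum_add_distrib]
  have hre : ∑ i : ZMod n, (if w = c (i + 1) then (1 : ZMod 2) else 0)
      = ∑ i : ZMod n, (if w = c i then (1 : ZMod 2) else 0) := by
    apply Finset.sum_equiv (Equiv.addRight (1 : ZMod n)) (by simp)
    intro i _
    rfl
  rw [hre]
  exact CharTwo.add_self_eq_zero _

/-- The main combinatorial extraction: a nonempty edge set with all degrees even and
no proper nonempty even subset is a circuit. -/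
theorem circuit_of_even_min (hSne : S.Nonempty)
    (hdeg : ∀ w : ℤ × ℤ, dg S w = 0)
    (hmin : ∀ T ⊆ S, T.Nonempty → (∀ w, dg T w = 0) → T = S) : IsCircuit S := by
  classical
  -- a good list exists
  obtain ⟨f₀, hf₀⟩ := hSne
  have hP2 : ∃ l, Good S l ∧ l.length = 2 := by
    refine ⟨[f₀.fst, f₀.snd], ⟨by simp, by simp [fst_ne_snd f₀], ?_⟩, by simp⟩
    show List.IsChain _ _; rw [List.isChain_pair]
    exact ⟨f₀, hf₀, rfl⟩
  set P : ℕ → Prop := fun m => ∃ l, Good S l ∧ l.length = m with hPdef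
  have hbound : ∀ m, P m → m ≤ (VS S).card := by
    rintro m ⟨l, hl, rfl⟩
    exact good_length_le S hl
  set n₀ : ℕ := Nat.findGreatest P (VS S).card with hn₀
  have hn₀P : P n₀ := Nat.findGreatest_spec (hbound 2 hP2) hP2
  have hmax : ∀ m, n₀ < m → ¬ P m := by
    intro m hm hPm
    exact Nat.findGreatest_is_greatest hm (hbound m hPm) hPm
  obtain ⟨l, hGood, hlen⟩ := hn₀P
  -- destructure the list
  obtain ⟨hlen2, hnodup, hchain⟩ := hGood
  rcases l with _ | ⟨v₀, l'⟩
  · simp at hlen2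
  rcases l' with _ | ⟨v₁, rest⟩
  · simp at hlen2
  set l : List (ℤ × ℤ) := v₀ :: v₁ :: rest with hldef
  obtain ⟨f₁, hf₁S, hf₁⟩ := (List.isChain_cons_cons.mp hchain).1
  -- find a second edge at v₀
  have hv₀f₁ : f₁ ∈ S.filter (fun f => v₀ ∈ f.ends) :=
    Finset.mem_filter.mpr ⟨hf₁S, mem_ends_left hf₁⟩
  have hcard : 1 < (S.filter (fun f => v₀ ∈ f.ends)).card := by
    have h1 : 1 ≤ (S.filter (fun f => v₀ ∈ f.ends)).card :=
      Finset.card_pos.mpr ⟨f₁, hv₀f₁⟩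
    rcases Nat.lt_or_ge 1 (S.filter (fun f => v₀ ∈ f.ends)).card with h | h
    · exact h
    · exfalso
      have hc1 : (S.filter (fun f => v₀ ∈ f.ends)).card = 1 := le_antisymm h h1
      have := hdeg v₀
      rw [dg, hc1] at this
      exact one_ne_zero this
  obtain ⟨f', hf'mem, hf'ne⟩ := Finset.exists_mem_ne hcard f₁
  obtain ⟨hf'S, hv₀f'⟩ := Finset.mem_filter.mp hf'mem
  -- the other end u of f'
  obtain ⟨u, hf'ends⟩ : ∃ u, f'.ends = s(v₀, u) := by
    rw [mem_ends_iff] at hv₀f'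
    rcases hv₀f' with h | h
    · exact ⟨f'.snd, by rw [h]; rfl⟩
    · exact ⟨f'.fst, by rw [h]; exact Sym2.eq_swap⟩
  have huv₀ : v₀ ≠ u := ends_eq_iff_ne hf'ends
  have huv₁ : u ≠ v₁ := by
    rintro rfl
    exact hf'ne (eq_of_ends_eq (hf'ends.trans hf₁.symm))
  -- u must be on the path, else we could extend
  have humem : u ∈ l := by
    by_contra hun
    apply hmax (n₀ + 1) (by omega)
    refine ⟨u :: l, ⟨by simp [hldef], ?_, ?_⟩, by simp [← hlen]⟩
    · exact List.nodup_cons.mpr ⟨hun, hnodup⟩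
    · show List.IsChain _ _; rw [List.isChain_cons_cons]
      exact ⟨⟨f', hf'S, hf'ends.trans Sym2.eq_swap⟩, hchain⟩
  obtain ⟨⟨j, hj⟩, hgetj⟩ := List.mem_iff_get.mp humem
  have hj0 : j ≠ 0 := by
    intro h
    apply huv₀
    rw [← hgetj]
    have he : (⟨j, hj⟩ : Fin l.length) = ⟨0, by omega⟩ := Fin.ext h
    rw [he]
    rfl
  have hj1 : j ≠ 1 := by
    intro h
    apply huv₁
    rw [← hgetj]
    have he : (⟨j, hj⟩ : Fin l.length) = ⟨1, by have := hlen2; omega⟩ := Fin.ext h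
    rw [he]
    rfl
  have hj2 : 2 ≤ j := by omega
  -- the cycle
  have hlpchain0 := List.IsChain.take hchain (j + 1)
  set lp : List (ℤ × ℤ) := l.take (j + 1) with hlp
  have hlplen : lp.length = j + 1 := by
    rw [hlp, List.length_take]
    omega
  set n : ℕ := j + 1 with hndef
  have hn3 : 3 ≤ n := by omega
  haveI : NeZero n := ⟨by omega⟩
  have hlpnodup : lp.Nodup := (List.take_sublist _ _).nodup hnodup
  have hlpchain : List.Chain' (fun u v => ∃ f ∈ S, f.ends = s(u, v)) lp := hlpchain0
  have hvlt : ∀ i : ZMod n, i.val < lp.length := by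
    intro i
    rw [hlplen]
    exact ZMod.val_lt i
  set c : ZMod n → ℤ × ℤ := fun i => lp.get ⟨i.val, hvlt i⟩ with hcdef
  have hcinj : Function.Injective c := by
    intro i i' h
    have := (hlpnodup.get_inj_iff).mp h
    have hv : i.val = i'.val := by
      have h2 := congrArg Fin.val this
      simpa using h2
    exact ZMod.val_injective n hv
  -- get of lp vs get of l
  have hlpget : ∀ (k : ℕ) (hk : k < lp.length), lp.get ⟨k, hk⟩ = l.get ⟨k, by rw [hlplen] at hk; omega⟩ := by
    intro k hk
    simp [hlp, List.getElem_take]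
  -- value of val of i+1
  haveI : Fact (1 < n) := ⟨by omega⟩
  have hvaladd : ∀ i : ZMod n, (i + 1).val = (i.val + 1) % n := by
    intro i
    rw [ZMod.val_add, ZMod.val_one]
  -- consecutive vertices are joined by edges of S
  have hstep : ∀ i : ZMod n, ∃ e ∈ S, e.ends = s(c i, c (i + 1)) := by
    intro i
    by_cases hi : i.val = n - 1
    · -- wrap-around: c i = u, c (i+1) = v₀
      have h1 : (i + 1).val = 0 := by
        rw [hvaladd, hi, show n - 1 + 1 = n by omega, Nat.mod_self]
      have hci : c i = u := by
        show lp.get ⟨i.val, hvlt i⟩ = u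
        have he2 : (⟨i.val, hvlt i⟩ : Fin lp.length) = ⟨j, by rw [hlplen]; omega⟩ :=
          Fin.ext (by simp; omega)
        rw [he2, hlpget j (by rw [hlplen]; omega), hgetj]
      have hci1 : c (i + 1) = v₀ := by
        show lp.get ⟨(i + 1).val, hvlt (i + 1)⟩ = v₀
        have he2 : (⟨(i + 1).val, hvlt (i + 1)⟩ : Fin lp.length) = ⟨0, by rw [hlplen]; omega⟩ :=
          Fin.ext (by simp [h1])
        rw [he2, hlpget 0 (by rw [hlplen]; omega)]
        rfl
      refine ⟨f', hf'S, ?_⟩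
      rw [hci, hci1, hf'ends]
      exact Sym2.eq_swap
    · have hilt : i.val < n - 1 := by have := ZMod.val_lt i; omega
      have h1 : (i + 1).val = i.val + 1 := by
        rw [hvaladd, Nat.mod_eq_of_lt (by omega)]
      obtain ⟨e, heS, he⟩ := List.isChain_iff_getElem.mp hlpchain i.val (by rw [hlplen]; omega)
      refine ⟨e, heS, ?_⟩
      rw [he]
      have e3 : c i = lp.get ⟨i.val, by rw [hlplen]; omega⟩ := rfl
      have e2 : c (i + 1) = lp.get ⟨i.val + 1, by rw [hlplen]; omega⟩ := by
        show lp.get ⟨(i + 1).val, hvlt (i + 1)⟩ = _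
        have he2 : (⟨(i + 1).val, hvlt (i + 1)⟩ : Fin lp.length) = ⟨i.val + 1, by rw [hlplen]; omega⟩ :=
          Fin.ext (by simp [h1])
        rw [he2]
      rw [e3, e2]; rfl
  -- choose the cycle edges
  choose g hgS hgends using hstep
  set T : Finset LatticeEdge := S.filter (fun e => ∃ i : ZMod n, e.ends = s(c i, c (i + 1))) with hT
  have hTimg : T = Finset.image g Finset.univ := by
    apply Finset.Subset.antisymm
    · intro e he
      obtain ⟨heS, i, hei⟩ := Finset.mem_filter.mp he
      have : e = g i := eq_of_ends_eq (hei.trans (hgends i).symm)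
      exact Finset.mem_image.mpr ⟨i, Finset.mem_univ i, this.symm⟩
    · intro e he
      obtain ⟨i, -, rfl⟩ := Finset.mem_image.mp he
      exact Finset.mem_filter.mpr ⟨hgS i, i, hgends i⟩
  have hTS : T = S := by
    apply hmin T (Finset.filter_subset _ _)
    · exact ⟨g 0, hTimg ▸ Finset.mem_image.mpr ⟨0, Finset.mem_univ 0, rfl⟩⟩
    · intro w
      rw [hTimg]
      exact dg_cycle hn3 c hcinj g hgends w
  refine ⟨n, hn3, c, hcinj, fun i => ⟨g i, hgS i, hgends i⟩, ?_⟩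
  intro e heS
  have : e ∈ T := hTS ▸ heS
  exact (Finset.mem_filter.mp this).2

end Cycle

end CircuitAux

/-- If `γ` is a contour, then the set `γ* = {e* : e ∈ γ}` of dual
edges is a circuit (a closed self-avoiding path) in the dual lattice. -/
theorem dual_of_contour_isCircuit (γ : Finset LatticeEdge) (h : IsContour γ) :
    IsCircuit (γ.image dualEdge) := by
  obtain ⟨C₀, hfin, -⟩ := h.1
  exact CircuitAux.circuit_of_even_min (γ.image dualEdge)
    ((CircuitAux.contour_nonempty h C₀ hfin).image dualEdge)
    (CircuitAux.dual_even h C₀ hfin)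
    (CircuitAux.dual_min h)
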